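/- Let Γg⁻¹Γ·Γh⁻¹Γ = ⊔_{k=1}^K Γz_kΓ be the decomposition of the product set into double cosets, m_k := #{(i,j) ∈ I×J : g_i h_j Γ = z_kΓ'} where z_kΓ' ranges over a fixed coset z_kΓ in Γz_kΓ, and d_k := the number of left Γ-cosets in Γz_kΓ. Then Σ_{k=1}^K m_k d_k = |I|·|J|. -/
import Mathlib

open Pointwise

/-- Let `Γg⁻¹Γ·Γh⁻¹Γ = ⊔_{k=1}^K Γz_kΓ` be the decomposition of the product set
into double cosets, `m_k` the number of pairs `(i,j)` with `g_i h_j Γ = z_kΓ`, and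
`d_k` the number of left `Γ`-cosets in `Γz_kΓ`.  Then `Σ_k m_k d_k = |I|·|J|`. -/
theorem shimura_counting (G : Type*) [Group G] (Γ : Subgroup G) (g h : G)
    (I J : Type*) [Fintype I] [Fintype J] (gs : I → G) (hs : J → G)
    (hgcover : {x : G | ∃ a ∈ Γ, ∃ b ∈ Γ, x = a * g⁻¹ * b}
        = ⋃ i : I, gs i • (Γ : Set G))
    (hgdisj : Pairwise fun i i' : I =>
      Disjoint (gs i • (Γ : Set G)) (gs i' • (Γ : Set G)))
    (hhcover : {x : G | ∃ a ∈ Γ, ∃ b ∈ Γ, x = a * h⁻¹ * b}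
        = ⋃ j : J, hs j • (Γ : Set G))
    (hhdisj : Pairwise fun j j' : J =>
      Disjoint (hs j • (Γ : Set G)) (hs j' • (Γ : Set G)))
    (K : ℕ) (z : Fin K → G)
    (hzcover : {x : G | ∃ a ∈ Γ, ∃ b ∈ Γ, ∃ c ∈ Γ, x = a * g⁻¹ * b * h⁻¹ * c}
        = ⋃ k : Fin K, {x : G | ∃ a ∈ Γ, ∃ b ∈ Γ, x = a * z k * b})
    (hzdisj : Pairwise fun k k' : Fin K =>
      Disjoint {x : G | ∃ a ∈ Γ, ∃ b ∈ Γ, x = a * z k * b}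
               {x : G | ∃ a ∈ Γ, ∃ b ∈ Γ, x = a * z k' * b}) :
    ∑ k : Fin K,
        Nat.card {p : I × J | (gs p.1 * hs p.2) • (Γ : Set G) = z k • (Γ : Set G)}
          * Nat.card (Set.range fun γ : Γ => ((γ : G) * z k) • (Γ : Set G))
      = Fintype.card I * Fintype.card J := by
  classical
  -- basic facts about cosets
  have self_mem : ∀ c : G, c ∈ c • (Γ : Set G) := fun c => ⟨1, Γ.one_mem, mul_one c⟩
  have absorb : ∀ (x τ : G), τ ∈ Γ → (x * τ) • (Γ : Set G) = x • (Γ : Set G) := by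
    intro x τ hτ
    rw [← smul_smul, smul_coe_set hτ]
  -- picking the unique left coset containing an element
  have hgpick : ∀ x : G, (∃ a ∈ Γ, ∃ b ∈ Γ, x = a * g⁻¹ * b) →
      ∃ i, ∃ δ ∈ Γ, x = gs i * δ := by
    intro x hx
    have hx' : x ∈ ⋃ i : I, gs i • (Γ : Set G) := hgcover ▸ hx
    obtain ⟨i, δ, hδ, hδeq⟩ := Set.mem_iUnion.mp hx'
    exact ⟨i, δ, hδ, hδeq.symm⟩
  have hhpick : ∀ x : G, (∃ a ∈ Γ, ∃ b ∈ Γ, x = a * h⁻¹ * b) →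
      ∃ j, ∃ ε ∈ Γ, x = hs j * ε := by
    intro x hx
    have hx' : x ∈ ⋃ j : J, hs j • (Γ : Set G) := hhcover ▸ hx
    obtain ⟨j, ε, hε, hεeq⟩ := Set.mem_iUnion.mp hx'
    exact ⟨j, ε, hε, hεeq.symm⟩
  have guniq : ∀ (x : G) (i i' : I), x ∈ gs i • (Γ : Set G) → x ∈ gs i' • (Γ : Set G) →
      i = i' := by
    intro x i i' h1 h2
    by_contra hne
    exact Set.disjoint_left.mp (hgdisj hne) h1 h2
  have huniq : ∀ (x : G) (j j' : J), x ∈ hs j • (Γ : Set G) → x ∈ hs j' • (Γ : Set G) →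
      j = j' := by
    intro x j j' h1 h2
    by_contra hne
    exact Set.disjoint_left.mp (hhdisj hne) h1 h2
  -- each `gs i` and `hs j` lies in its double coset
  have hgs_mem : ∀ i : I, ∃ a ∈ Γ, ∃ b ∈ Γ, gs i = a * g⁻¹ * b := by
    intro i
    have h2 : gs i ∈ {x : G | ∃ a ∈ Γ, ∃ b ∈ Γ, x = a * g⁻¹ * b} := by
      rw [hgcover]; exact Set.mem_iUnion.mpr ⟨i, self_mem _⟩
    exact h2
  have hhs_mem : ∀ j : J, ∃ a ∈ Γ, ∃ b ∈ Γ, hs j = a * h⁻¹ * b := by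
    intro j
    have h2 : hs j ∈ {x : G | ∃ a ∈ Γ, ∃ b ∈ Γ, x = a * h⁻¹ * b} := by
      rw [hhcover]; exact Set.mem_iUnion.mpr ⟨j, self_mem _⟩
    exact h2
  -- the twisting maps
  have exT : ∀ (γ : Γ) (i : I) (j : J), ∃ (i' : I) (j' : J), ∃ δ ∈ Γ, ∃ ε ∈ Γ,
      (γ : G)⁻¹ * gs i = gs i' * δ ∧ δ * hs j = hs j' * ε := by
    intro γ i j
    obtain ⟨a, ha, b, hb, hab⟩ := hgs_mem i
    obtain ⟨i', δ, hδ, hδeq⟩ := hgpick ((γ : G)⁻¹ * gs i)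
      ⟨(γ : G)⁻¹ * a, Γ.mul_mem (Γ.inv_mem γ.2) ha, b, hb, by rw [hab]; group⟩
    obtain ⟨c, hc, d, hd, hcd⟩ := hhs_mem j
    obtain ⟨j', ε, hε, hεeq⟩ := hhpick (δ * hs j)
      ⟨δ * c, Γ.mul_mem hδ hc, d, hd, by rw [hcd]; group⟩
    exact ⟨i', j', δ, hδ, ε, hε, hδeq, hεeq⟩
  choose Ti Tj δf hδΓ εf hεΓ hδeq hεeq using exT
  set T : Γ → I × J → I × J := fun γ p => (Ti γ p.1 p.2, Tj γ p.1 p.2) with hT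
  have Tcoset : ∀ (γ : Γ) (p : I × J),
      (gs (T γ p).1 * hs (T γ p).2) • (Γ : Set G)
        = ((γ : G)⁻¹ * (gs p.1 * hs p.2)) • (Γ : Set G) := by
    intro γ ⟨i, j⟩
    have e1 := hδeq γ i j
    have e2 := hεeq γ i j
    have key : gs (Ti γ i j) * hs (Tj γ i j)
        = (γ : G)⁻¹ * (gs i * hs j) * (εf γ i j)⁻¹ := by
      have h3 : hs (Tj γ i j) = δf γ i j * hs j * (εf γ i j)⁻¹ := by
        rw [e2]; group
      rw [h3]
      have h4 : gs (Ti γ i j) * δf γ i j = (γ : G)⁻¹ * gs i := e1.symm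
      calc gs (Ti γ i j) * (δf γ i j * hs j * (εf γ i j)⁻¹)
          = gs (Ti γ i j) * δf γ i j * hs j * (εf γ i j)⁻¹ := by group
        _ = (γ : G)⁻¹ * gs i * hs j * (εf γ i j)⁻¹ := by rw [h4]
        _ = (γ : G)⁻¹ * (gs i * hs j) * (εf γ i j)⁻¹ := by group
    show (gs (Ti γ i j) * hs (Tj γ i j)) • (Γ : Set G) = _
    rw [key, absorb _ _ (Γ.inv_mem (hεΓ γ i j))]
  have Tinv : ∀ (γ : Γ) (p : I × J), T γ⁻¹ (T γ p) = p := by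
    intro γ ⟨i, j⟩
    have e1 := hδeq γ i j  -- γ⁻¹ * gs i = gs i' * δ
    have e2 := hεeq γ i j  -- δ * hs j = hs j' * ε
    have e1' := hδeq γ⁻¹ (Ti γ i j) (Tj γ i j)
    have e2' := hεeq γ⁻¹ (Ti γ i j) (Tj γ i j)
    rw [show ((γ⁻¹ : Γ) : G) = (γ : G)⁻¹ from rfl, inv_inv] at e1'
    -- γ * gs i' = gs i * δ⁻¹
    have key1 : (γ : G) * gs (Ti γ i j) = gs i * (δf γ i j)⁻¹ := by
      have : gs (Ti γ i j) = (γ : G)⁻¹ * gs i * (δf γ i j)⁻¹ := by rw [e1]; group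
      rw [this]; group
    have hi : Ti γ⁻¹ (Ti γ i j) (Tj γ i j) = i := by
      apply guniq ((γ : G) * gs (Ti γ i j))
      · exact ⟨δf γ⁻¹ (Ti γ i j) (Tj γ i j), hδΓ γ⁻¹ (Ti γ i j) (Tj γ i j), e1'.symm⟩
      · exact ⟨(δf γ i j)⁻¹, Γ.inv_mem (hδΓ γ i j), key1.symm⟩
    have hδ' : δf γ⁻¹ (Ti γ i j) (Tj γ i j) = (δf γ i j)⁻¹ := by
      apply mul_left_cancel (a := gs i)
      rw [← key1, e1', hi]
    have key2 : δf γ⁻¹ (Ti γ i j) (Tj γ i j) * hs (Tj γ i j) = hs j * (εf γ i j)⁻¹ := by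
      rw [hδ']
      have : hs (Tj γ i j) = δf γ i j * hs j * (εf γ i j)⁻¹ := by rw [e2]; group
      rw [this]; group
    have hj : Tj γ⁻¹ (Ti γ i j) (Tj γ i j) = j := by
      apply huniq (δf γ⁻¹ (Ti γ i j) (Tj γ i j) * hs (Tj γ i j))
      · exact ⟨εf γ⁻¹ (Ti γ i j) (Tj γ i j), hεΓ γ⁻¹ (Ti γ i j) (Tj γ i j), e2'.symm⟩
      · exact ⟨(εf γ i j)⁻¹, Γ.inv_mem (hεΓ γ i j), key2.symm⟩
    show (Ti γ⁻¹ (Ti γ i j) (Tj γ i j), Tj γ⁻¹ (Ti γ i j) (Tj γ i j)) = (i, j)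
    rw [hi, hj]
  -- bijection between fibres over `γ • C` and over `C`
  have card_eq : ∀ (γ : Γ) (C : Set G),
      (Finset.univ.filter fun p : I × J =>
        (gs p.1 * hs p.2) • (Γ : Set G) = (γ : G) • C).card
      = (Finset.univ.filter fun p : I × J =>
        (gs p.1 * hs p.2) • (Γ : Set G) = C).card := by
    intro γ C
    apply Finset.card_bij (fun p _ => T γ p)
    · intro p hp
      simp only [Finset.mem_filter, Finset.mem_univ, true_and] at hp ⊢
      rw [Tcoset γ p, ← smul_smul, hp, inv_smul_smul]
    · intro p1 h1 p2 h2 heq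
      have := congrArg (T γ⁻¹) heq
      rwa [Tinv, Tinv] at this
    · intro q hq
      simp only [Finset.mem_filter, Finset.mem_univ, true_and] at hq
      refine ⟨T γ⁻¹ q, ?_, ?_⟩
      · simp only [Finset.mem_filter, Finset.mem_univ, true_and]
        rw [Tcoset γ⁻¹ q, ← smul_smul, hq,
          show ((γ⁻¹ : Γ) : G) = (γ : G)⁻¹ from rfl, inv_inv]
      · have := Tinv γ⁻¹ q
        rwa [inv_inv] at this
  -- classification of pairs by double cosets
  have hzmem : ∀ p : I × J, ∃ k : Fin K, ∃ a ∈ Γ, ∃ b ∈ Γ, gs p.1 * hs p.2 = a * z k * b := by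
    intro p
    obtain ⟨a, ha, b, hb, hgeq⟩ := hgs_mem p.1
    obtain ⟨c, hc, d, hd, hheq⟩ := hhs_mem p.2
    have : gs p.1 * hs p.2
        ∈ {x : G | ∃ a ∈ Γ, ∃ b ∈ Γ, ∃ c ∈ Γ, x = a * g⁻¹ * b * h⁻¹ * c} :=
      ⟨a, ha, b * c, Γ.mul_mem hb hc, d, hd, by rw [hgeq, hheq]; group⟩
    rw [hzcover] at this
    obtain ⟨k, hk⟩ := Set.mem_iUnion.mp this
    exact ⟨k, hk⟩
  choose φ aφ haφ bφ hbφ hφ using hzmem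
  have kuniq : ∀ (p : I × J) (k : Fin K),
      (∃ a ∈ Γ, ∃ b ∈ Γ, gs p.1 * hs p.2 = a * z k * b) → φ p = k := by
    intro p k hk
    by_contra hne
    exact Set.disjoint_left.mp (hzdisj hne) ⟨aφ p, haφ p, bφ p, hbφ p, hφ p⟩ hk
  have φcoset : ∀ p q : I × J,
      (gs p.1 * hs p.2) • (Γ : Set G) = (gs q.1 * hs q.2) • (Γ : Set G) → φ p = φ q := by
    intro p q hpq
    apply kuniq
    have : gs p.1 * hs p.2 ∈ (gs q.1 * hs q.2) • (Γ : Set G) := hpq ▸ self_mem _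
    obtain ⟨τ, hτ, hτeq⟩ := this
    simp only [smul_eq_mul] at hτeq
    refine ⟨aφ q, haφ q, bφ q * τ, Γ.mul_mem (hbφ q) hτ, ?_⟩
    rw [← hτeq, hφ q]; group
  -- finsets
  set fib : Fin K → Finset (I × J) := fun k => Finset.univ.filter fun p => φ p = k with hfib
  set Tk : Fin K → Finset (Set G) := fun k =>
    (fib k).image fun p => (gs p.1 * hs p.2) • (Γ : Set G) with hTk
  set mset : Fin K → Finset (I × J) := fun k =>
    Finset.univ.filter fun p => (gs p.1 * hs p.2) • (Γ : Set G) = z k • (Γ : Set G)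
    with hmset
  -- the range of cosets equals the image finset
  have hSk : ∀ k : Fin K,
      (Set.range fun γ : Γ => ((γ : G) * z k) • (Γ : Set G)) = ↑(Tk k) := by
    intro k
    ext C
    constructor
    · rintro ⟨γ, rfl⟩
      have hmem : (γ : G) * z k
          ∈ {x : G | ∃ a ∈ Γ, ∃ b ∈ Γ, ∃ c ∈ Γ, x = a * g⁻¹ * b * h⁻¹ * c} := by
        rw [hzcover]
        exact Set.mem_iUnion.mpr ⟨k, γ, γ.2, 1, Γ.one_mem, by group⟩
      obtain ⟨a, ha, b, hb, c, hc, heq⟩ := hmem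
      obtain ⟨i, δ, hδ, hδeq⟩ := hgpick (a * g⁻¹ * b) ⟨a, ha, b, hb, rfl⟩
      obtain ⟨j, ε, hε, hεeq⟩ := hhpick (δ * h⁻¹ * c) ⟨δ, hδ, c, hc, rfl⟩
      have key : (γ : G) * z k = gs i * hs j * ε := by
        calc (γ : G) * z k = a * g⁻¹ * b * h⁻¹ * c := heq
          _ = gs i * δ * h⁻¹ * c := by rw [← hδeq]
          _ = gs i * (δ * h⁻¹ * c) := by group
          _ = gs i * (hs j * ε) := by rw [← hεeq]
          _ = gs i * hs j * ε := by group
      have hc2 : (gs i * hs j) • (Γ : Set G) = ((γ : G) * z k) • (Γ : Set G) := by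
        rw [key, absorb _ _ hε]
      have hφk : φ (i, j) = k := by
        apply kuniq
        refine ⟨γ, γ.2, ε⁻¹, Γ.inv_mem hε, ?_⟩
        rw [key]; group
      refine Finset.mem_coe.mpr (Finset.mem_image.mpr ⟨(i, j), ?_, hc2⟩)
      simp only [hfib, Finset.mem_filter, Finset.mem_univ, true_and]
      exact hφk
    · intro hC
      obtain ⟨p, hp, rfl⟩ := Finset.mem_image.mp (Finset.mem_coe.mp hC)
      have hpk : φ p = k := by
        simpa only [hfib, Finset.mem_filter, Finset.mem_univ, true_and] using hp
      refine ⟨⟨aφ p, haφ p⟩, ?_⟩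
      show ((aφ p : G) * z k) • (Γ : Set G) = (gs p.1 * hs p.2) • (Γ : Set G)
      rw [hφ p, hpk, absorb _ _ (hbφ p)]
  -- fibre count
  have main : ∀ k : Fin K, (fib k).card = (Tk k).card * (mset k).card := by
    intro k
    rw [Finset.card_eq_sum_card_fiberwise
      (f := fun p : I × J => (gs p.1 * hs p.2) • (Γ : Set G)) (t := Tk k)
      (fun p hp => Finset.mem_image_of_mem _ hp)]
    have hterm : ∀ C ∈ Tk k,
        ((fib k).filter fun p => (gs p.1 * hs p.2) • (Γ : Set G) = C).card
          = (mset k).card := by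
      intro C hC
      have hfil : (fib k).filter (fun p => (gs p.1 * hs p.2) • (Γ : Set G) = C)
          = Finset.univ.filter (fun p => (gs p.1 * hs p.2) • (Γ : Set G) = C) := by
        obtain ⟨q, hq, rfl⟩ := Finset.mem_image.mp hC
        have hqk : φ q = k := by
          simpa only [hfib, Finset.mem_filter, Finset.mem_univ, true_and] using hq
        ext p
        simp only [hfib, Finset.mem_filter, Finset.mem_univ, true_and]
        constructor
        · rintro ⟨-, h2⟩; exact h2
        · intro h2; exact ⟨(φcoset p q h2).trans hqk, h2⟩
      have : C ∈ Set.range fun γ : Γ => ((γ : G) * z k) • (Γ : Set G) := by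
        rw [hSk k]; exact Finset.mem_coe.mpr hC
      obtain ⟨γ, hγ⟩ := this
      have hγ' : (γ : G) • (z k • (Γ : Set G)) = C := by
        rw [smul_smul]; exact hγ
      rw [hfil, ← hγ']
      exact card_eq γ (z k • (Γ : Set G))
    rw [Finset.sum_congr rfl hterm, Finset.sum_const, smul_eq_mul]
  -- total count
  have total : ∑ k : Fin K, (fib k).card = Fintype.card I * Fintype.card J := by
    calc ∑ k : Fin K, (fib k).card
        = (Finset.univ : Finset (I × J)).card :=
          (Finset.card_eq_sum_card_fiberwise (f := φ) (t := Finset.univ)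
            (fun p _ => Finset.mem_univ (φ p))).symm
      _ = Fintype.card I * Fintype.card J := by
          rw [Finset.card_univ, Fintype.card_prod]
  -- conversions between `Nat.card` and finset cards
  have m_eq : ∀ k : Fin K,
      Nat.card {p : I × J | (gs p.1 * hs p.2) • (Γ : Set G) = z k • (Γ : Set G)}
        = (mset k).card := by
    intro k
    have hset : {p : I × J | (gs p.1 * hs p.2) • (Γ : Set G) = z k • (Γ : Set G)}
        = ↑(mset k) := by
      ext p
      simp [hmset]
    rw [hset, Nat.card_coe_set_eq, Set.ncard_coe_finset]
  have d_eq : ∀ k : Fin K,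
      Nat.card (Set.range fun γ : Γ => ((γ : G) * z k) • (Γ : Set G)) = (Tk k).card := by
    intro k
    rw [hSk k, Nat.card_coe_set_eq, Set.ncard_coe_finset]
  calc ∑ k : Fin K,
        Nat.card {p : I × J | (gs p.1 * hs p.2) • (Γ : Set G) = z k • (Γ : Set G)}
          * Nat.card (Set.range fun γ : Γ => ((γ : G) * z k) • (Γ : Set G))
      = ∑ k : Fin K, (mset k).card * (Tk k).card := by
        refine Finset.sum_congr rfl fun k _ => ?_
        rw [m_eq k, d_eq k]
    _ = ∑ k : Fin K, (fib k).card := by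
        refine Finset.sum_congr rfl fun k _ => ?_
        rw [main k, mul_comm]
    _ = Fintype.card I * Fintype.card J := total
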